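/- Let α > 0 and 0 < η < 1/4, and let δ > 0 satisfy δ^{2α} > (1−√(1−4η))/2. Then every differentiable function λ_S : [0,∞) → ℝ with λ_S(0) = δ that satisfies the differential equation λ_S'(t) = λ_S(t)·(−|λ_S(t)|^{4α} + |λ_S(t)|^{2α} − η) for all t ≥ 0 satisfies λ_S(t)^{2α} → (1+√(1−4η))/2 as t → ∞. -/

import Mathlib

open Filter

set_option maxHeartbeats 1000000 in
/-- Under DirectSet(α) gradient flow with weight decay `0 < η < 1/4`,
the eigenvalue dynamics in the invariant subspace `S`,
`λ_S' = λ_S (−|λ_S|^{4α} + |λ_S|^{2α} − η)` with `λ_S(0) = δ` and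
`δ^{2α} > (1−√(1−4η))/2`, satisfy `λ_S(t)^{2α} → (1+√(1−4η))/2`. -/
theorem directset_invariant_eigen_converges
    (α η δ : ℝ) (hα : 0 < α) (hη1 : 0 < η) (hη2 : η < 1 / 4) (hδpos : 0 < δ)
    (hδ : (1 - Real.sqrt (1 - 4 * η)) / 2 < δ ^ (2 * α))
    (lamS : ℝ → ℝ) (hdiff : Differentiable ℝ lamS) (h0 : lamS 0 = δ)
    (hode : ∀ t : ℝ, 0 ≤ t →
      deriv lamS t =
        lamS t * (-|lamS t| ^ (4 * α) + |lamS t| ^ (2 * α) - η)) :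
    Tendsto (fun t => lamS t ^ (2 * α)) atTop
      (nhds ((1 + Real.sqrt (1 - 4 * η)) / 2)) := by
  have h4η : (0:ℝ) < 1 - 4 * η := by linarith
  set c := Real.sqrt (1 - 4 * η) with hc
  have hc0 : 0 < c := Real.sqrt_pos.mpr h4η
  have hcsq : c ^ 2 = 1 - 4 * η := Real.sq_sqrt h4η.le
  have hc1 : c < 1 := by nlinarith
  set rm := (1 - c) / 2 with hrm
  set rp := (1 + c) / 2 with hrp
  have hrm0 : 0 < rm := by rw [hrm]; linarith
  have hrmh : rm < 1/2 := by rw [hrm]; linarith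
  have hrph : (1:ℝ)/2 < rp := by rw [hrp]; linarith
  have hsum : rm + rp = 1 := by rw [hrm, hrp]; ring
  have hprod : rm * rp = η := by
    have : rm * rp = (1 - c^2)/4 := by rw [hrm, hrp]; ring
    rw [this, hcsq]; ring
  have hfac : ∀ z : ℝ, -z^2 + z - η = -((z - rm) * (z - rp)) := by
    intro z; linear_combination (-z) * hsum + hprod
  have hcont := hdiff.continuous
  -- positivity of lamS on [0, ∞)
  have hpos : ∀ t, 0 ≤ t → 0 < lamS t := by
    intro t₁ ht₁
    by_contra hle
    push_neg at hle
    set S : Set ℝ := {t | t ∈ Set.Icc 0 t₁ ∧ lamS t ≤ 0} with hSdef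
    have hSclosed : IsClosed S := by
      have : S = Set.Icc 0 t₁ ∩ lamS ⁻¹' Set.Iic 0 := rfl
      rw [this]; exact isClosed_Icc.inter (isClosed_Iic.preimage hcont)
    have hSne : S.Nonempty := ⟨t₁, ⟨⟨ht₁, le_refl _⟩, hle⟩⟩
    have hSbdd : BddBelow S := ⟨0, fun x hx => hx.1.1⟩
    set s := sInf S with hs
    have hsmem : s ∈ S := hSclosed.csInf_mem hSne hSbdd
    have hs0 : 0 ≤ s := hsmem.1.1
    have hspos : 0 < s := by
      rcases lt_or_eq_of_le hs0 with h | h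
      · exact h
      · exfalso; have := hsmem.2; rw [← h, h0] at this; linarith
    have hpre : ∀ t, 0 ≤ t → t < s → 0 < lamS t := by
      intro t ht hts
      by_contra hle'
      push_neg at hle'
      have : t ∈ S := ⟨⟨ht, hts.le.trans hsmem.1.2⟩, hle'⟩
      exact absurd (csInf_le hSbdd this) (not_le.mpr hts)
    set G : ℝ → ℝ := fun t => -|lamS t| ^ (4*α) + |lamS t| ^ (2*α) - η with hGdef
    have hGcont : Continuous G := by
      have h1 : Continuous fun t => |lamS t| := hcont.abs
      exact ((h1.rpow_const (fun t => Or.inr (by positivity))).neg.add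
        (h1.rpow_const (fun t => Or.inr (by positivity)))).sub continuous_const
    obtain ⟨C, hC⟩ := (isCompact_Icc (a := (0:ℝ)) (b := s)).exists_bound_of_continuousOn
      hGcont.continuousOn
    set ψ : ℝ → ℝ := fun t => lamS t * Real.exp (C * t) with hψdef
    have hψd : ∀ t : ℝ, HasDerivAt ψ
        ((deriv lamS t + C * lamS t) * Real.exp (C * t)) t := by
      intro t
      have h1 : HasDerivAt (fun x : ℝ => Real.exp (C * x)) (Real.exp (C * t) * (C * 1)) t :=
        ((hasDerivAt_id t).const_mul C).exp
      have h2 := (hdiff t).hasDerivAt.mul h1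
      exact h2.congr_deriv (by ring)
    have hmono : MonotoneOn ψ (Set.Icc 0 s) := by
      apply monotoneOn_of_deriv_nonneg (convex_Icc 0 s)
      · exact (hcont.mul (Real.continuous_exp.comp (continuous_const.mul continuous_id))).continuousOn
      · intro t ht
        exact (hψd t).differentiableAt.differentiableWithinAt
      · intro t ht
        rw [interior_Icc] at ht
        rw [(hψd t).deriv]
        have hode' := hode t ht.1.le
        have hGt : -G t ≤ C := by
          have := hC t ⟨ht.1.le, ht.2.le⟩
          rw [Real.norm_eq_abs] at this
          have := abs_le.mp this
          linarith [this.1]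
        have hlt : 0 < lamS t := hpre t ht.1.le ht.2
        have : deriv lamS t + C * lamS t = lamS t * (G t + C) := by
          rw [hode']; simp only [hGdef]; ring
        rw [this]
        have : 0 ≤ G t + C := by linarith
        positivity
    have h1 : ψ 0 ≤ ψ s :=
      hmono ⟨le_refl 0, hs0⟩ ⟨hs0, le_refl s⟩ hs0
    have h2 : ψ 0 = δ := by simp [hψdef, h0]
    have h3 : ψ s ≤ 0 := by
      simp only [hψdef]
      exact mul_nonpos_of_nonpos_of_nonneg hsmem.2 (Real.exp_nonneg _)
    linarith
  -- y = lamS ^ (2α)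
  set y : ℝ → ℝ := fun t => lamS t ^ (2*α) with hy
  have hycont : ∀ t, 0 ≤ t → ContinuousAt y t := by
    intro t ht
    exact hcont.continuousAt.rpow_const (Or.inl (hpos t ht).ne')
  have hyd : ∀ t, 0 ≤ t →
      HasDerivAt y (2*α * (y t * -((y t - rm) * (y t - rp)))) t := by
    intro t ht
    have hu := hpos t ht
    have h1 : HasDerivAt y (deriv lamS t * (2*α) * lamS t ^ (2*α - 1)) t :=
      (hdiff t).hasDerivAt.rpow_const (Or.inl hu.ne')
    convert h1 using 1
    rw [hode t ht, abs_of_pos hu]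
    have e1 : lamS t ^ (4*α) = lamS t ^ (2*α) * lamS t ^ (2*α) := by
      rw [← Real.rpow_add hu]; ring_nf
    have e2 : lamS t * lamS t ^ (2*α - 1) = lamS t ^ (2*α) := by
      nth_rewrite 1 [← Real.rpow_one (lamS t)]
      rw [← Real.rpow_add hu]; ring_nf
    have hfy := hfac (lamS t ^ (2*α))
    simp only [hy]
    linear_combination (-(2*α)*(-lamS t ^ (4*α) + lamS t ^ (2*α) - η)) * e2 +
      (2*α*lamS t ^ (2*α)) * e1 + (-(2*α)*lamS t ^ (2*α)) * hfy
  -- lower barrier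
  set m := min (δ ^ (2*α)) (1/2 : ℝ) with hm
  have hy0 : y 0 = δ ^ (2*α) := by simp [hy, h0]
  have hrmm : rm < m := lt_min hδ hrmh
  have hmrp : m < rp := lt_of_le_of_lt (min_le_right _ _) hrph
  have hm0 : 0 < m := hrm0.trans hrmm
  have hlow : ∀ t, 0 ≤ t → m ≤ y t := by
    intro t₁ ht₁
    by_contra hlt
    push_neg at hlt
    have hT0 : m ≤ y 0 := by rw [hy0]; exact min_le_left _ _
    set T : Set ℝ := {t | t ∈ Set.Icc 0 t₁ ∧ m ≤ y t} with hTdef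
    have hTne : (0:ℝ) ∈ T := ⟨⟨le_refl 0, ht₁⟩, hT0⟩
    have hTclosed : IsClosed T := by
      have hyco : ContinuousOn y (Set.Icc 0 t₁) :=
        fun t ht => (hycont t ht.1).continuousWithinAt
      have : T = Set.Icc 0 t₁ ∩ y ⁻¹' Set.Ici m := rfl
      rw [this]
      exact hyco.preimage_isClosed_of_isClosed isClosed_Icc isClosed_Ici
    have hTbdd : BddAbove T := ⟨t₁, fun x hx => hx.1.2⟩
    set s := sSup T with hs
    have hsmem : s ∈ T := hTclosed.csSup_mem ⟨0, hTne⟩ hTbdd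
    have hs0 : 0 ≤ s := hsmem.1.1
    have hst₁ : s < t₁ := by
      rcases lt_or_eq_of_le hsmem.1.2 with h | h
      · exact h
      · exfalso; have := hsmem.2; rw [h] at this; linarith
    have hafter : ∀ t, s < t → t ≤ t₁ → y t < m := by
      intro t h1 h2
      by_contra h3
      push_neg at h3
      have : t ∈ T := ⟨⟨hs0.trans h1.le, h2⟩, h3⟩
      exact absurd (le_csSup hTbdd this) (not_le.mpr h1)
    have hys : y s = m := by
      refine le_antisymm ?_ hsmem.2
      have hct : Tendsto y (nhdsWithin s (Set.Ioi s)) (nhds (y s)) :=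
        ((hycont s hs0).tendsto).mono_left nhdsWithin_le_nhds
      refine le_of_tendsto hct ?_
      filter_upwards [Ioo_mem_nhdsGT_of_mem ⟨le_refl s, hst₁⟩] with t ht
      exact (hafter t ht.1 ht.2.le).le
    have hd := hyd s hs0
    rw [hys] at hd
    have hL : 0 < 2*α * (m * -((m - rm) * (m - rp))) := by
      have h1 : 0 < (m - rm) * (rp - m) := mul_pos (by linarith) (by linarith)
      nlinarith [mul_pos (mul_pos hα hm0) h1]
    have hslope := hasDerivAt_iff_tendsto_slope.mp hd
    have hsub : Set.Ioi s ⊆ {s}ᶜ := fun x hx => ne_of_gt hx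
    have hslope' : Tendsto (slope y s) (nhdsWithin s (Set.Ioi s))
        (nhds (2*α * (m * -((m - rm) * (m - rp))))) :=
      hslope.mono_left (nhdsWithin_mono s hsub)
    have hle0 : 2*α * (m * -((m - rm) * (m - rp))) ≤ 0 := by
      refine le_of_tendsto hslope' ?_
      filter_upwards [Ioo_mem_nhdsGT_of_mem ⟨le_refl s, hst₁⟩] with t ht
      have h1 : y t < m := hafter t ht.1 ht.2.le
      rw [slope_def_field, hys]
      apply div_nonpos_of_nonpos_of_nonneg
      · linarith
      · linarith [ht.1]
    linarith
  -- Gronwall: (y - rp)^2 decays exponentially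
  set k := 4*α*(m*(m - rm)) with hk
  have hk0 : 0 < k := by
    have : 0 < m - rm := by linarith
    positivity
  set φ : ℝ → ℝ := fun t => (y t - rp)^2 * Real.exp (k*t) with hφ
  have hφd : ∀ t, 0 ≤ t → HasDerivAt φ
      ((2 * (y t - rp) * (2*α * (y t * -((y t - rm) * (y t - rp))))) * Real.exp (k*t)
        + (y t - rp)^2 * (Real.exp (k*t) * k)) t := by
    intro t ht
    have h1 : HasDerivAt (fun x => (y x - rp)^2)
        (2 * (y t - rp) * (2*α * (y t * -((y t - rm) * (y t - rp))))) t := by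
      have := ((hyd t ht).sub_const rp).pow 2
      exact this.congr_deriv (by ring)
    have h2 : HasDerivAt (fun x : ℝ => Real.exp (k * x)) (Real.exp (k * t) * (k * 1)) t :=
      ((hasDerivAt_id t).const_mul k).exp
    have := h1.mul h2
    exact this.congr_deriv (by ring)
  have hanti : AntitoneOn φ (Set.Ici 0) := by
    apply antitoneOn_of_deriv_nonpos (convex_Ici 0)
    · intro t ht
      exact (((hycont t ht).sub continuousAt_const).pow 2).mul
        ((Real.continuous_exp.comp (continuous_const.mul continuous_id)).continuousAt)
        |>.continuousWithinAt
    · intro t ht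
      rw [interior_Ici] at ht
      exact (hφd t (le_of_lt ht)).differentiableAt.differentiableWithinAt
    · intro t ht
      rw [interior_Ici] at ht
      rw [(hφd t ht.le).deriv]
      have hyt := hlow t ht.le
      have hytpos : 0 < y t := hm0.trans_le hyt
      have hcoef : k ≤ 4*α*(y t * (y t - rm)) := by
        rw [hk]
        have h1 : 0 < m - rm := by linarith
        have h2 : m - rm ≤ y t - rm := by linarith
        have : m * (m - rm) ≤ y t * (y t - rm) :=
          mul_le_mul hyt h2 h1.le hytpos.le
        nlinarith
      have hexp : 0 < Real.exp (k*t) := Real.exp_pos _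
      have : (2 * (y t - rp) * (2*α * (y t * -((y t - rm) * (y t - rp))))) * Real.exp (k*t)
          + (y t - rp)^2 * (Real.exp (k*t) * k)
          = Real.exp (k*t) * ((y t - rp)^2 * (k - 4*α*(y t * (y t - rm)))) := by ring
      rw [this]
      have h3 : k - 4*α*(y t * (y t - rm)) ≤ 0 := by linarith
      have h4 : (y t - rp)^2 * (k - 4*α*(y t * (y t - rm))) ≤ 0 :=
        mul_nonpos_of_nonneg_of_nonpos (sq_nonneg _) h3
      exact mul_nonpos_of_nonneg_of_nonpos hexp.le h4
  have hdecay : ∀ t, 0 ≤ t → (y t - rp)^2 ≤ (δ ^ (2*α) - rp)^2 * Real.exp (-(k*t)) := by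
    intro t ht
    have h1 : φ t ≤ φ 0 := hanti (Set.self_mem_Ici) ht ht
    have h2 : φ 0 = (δ ^ (2*α) - rp)^2 := by
      simp [hφ, hy0]
    have h3 : φ t = (y t - rp)^2 * Real.exp (k*t) := rfl
    rw [h2, h3] at h1
    have hexp : 0 < Real.exp (k*t) := Real.exp_pos _
    rw [Real.exp_neg, ← div_eq_mul_inv, le_div_iff₀ hexp]
    exact h1
  -- conclude
  set B := |δ ^ (2*α) - rp| with hB
  have habs : ∀ t, 0 ≤ t → |y t - rp| ≤ B * Real.exp (-(k/2 * t)) := by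
    intro t ht
    have h1 := hdecay t ht
    have h2 : (B * Real.exp (-(k/2 * t)))^2 = (δ ^ (2*α) - rp)^2 * Real.exp (-(k*t)) := by
      rw [mul_pow, hB, sq_abs]
      congr 1
      rw [pow_two, ← Real.exp_add]
      congr 1
      ring
    have h3 : (y t - rp)^2 ≤ (B * Real.exp (-(k/2 * t)))^2 := by rw [h2]; exact h1
    have h4 : 0 ≤ B * Real.exp (-(k/2 * t)) := by positivity
    calc |y t - rp| = Real.sqrt ((y t - rp)^2) := (Real.sqrt_sq_eq_abs _).symm
      _ ≤ Real.sqrt ((B * Real.exp (-(k/2 * t)))^2) := Real.sqrt_le_sqrt h3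
      _ = B * Real.exp (-(k/2 * t)) := Real.sqrt_sq h4
  have hbtend : Tendsto (fun t : ℝ => B * Real.exp (-(k/2 * t))) atTop (nhds 0) := by
    have h1 : Tendsto (fun t : ℝ => k/2 * t) atTop atTop :=
      Tendsto.const_mul_atTop (by positivity) tendsto_id
    have h2 := Real.tendsto_exp_neg_atTop_nhds_zero.comp h1
    have := h2.const_mul B
    simpa using this
  have hlb : Tendsto (fun t : ℝ => rp - B * Real.exp (-(k/2 * t))) atTop (nhds rp) := by
    simpa using tendsto_const_nhds.sub hbtend
  have hub : Tendsto (fun t : ℝ => rp + B * Real.exp (-(k/2 * t))) atTop (nhds rp) := by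
    simpa using tendsto_const_nhds.add hbtend
  refine tendsto_of_tendsto_of_tendsto_of_le_of_le' hlb hub ?_ ?_
  · filter_upwards [eventually_ge_atTop (0:ℝ)] with t ht
    have := abs_le.mp (habs t ht)
    linarith [this.1]
  · filter_upwards [eventually_ge_atTop (0:ℝ)] with t ht
    have := abs_le.mp (habs t ht)
    linarith [this.2]
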